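/- As ε → 0⁺, the unique minimizer P_ε of the entropic regularized OT problem converges to the maximal-entropy element among the optimal solutions of the unregularized Kantorovich problem, i.e., P_ε → argmin{ −H(P) : P ∈ U(a,b), ⟨P,C⟩ = W⁰_C(a,b) }. -/
import Mathlib


open Finset Real Filter

noncomputable def entropy {n m : ℕ} (P : Matrix (Fin n) (Fin m) ℝ) : ℝ :=
  -∑ i, ∑ j, P i j * (Real.log (P i j) - 1)

def couplings {n m : ℕ} (a : Fin n → ℝ) (b : Fin m → ℝ) :
    Set (Matrix (Fin n) (Fin m) ℝ) :=
  {P | (∀ i j, 0 ≤ P i j) ∧ (∀ i, ∑ j, P i j = a i) ∧ (∀ j, ∑ i, P i j = b j)}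

noncomputable def dotp {n m : ℕ} (P C : Matrix (Fin n) (Fin m) ℝ) : ℝ :=
  ∑ i, ∑ j, P i j * C i j

/-- The unregularized optimal value `W⁰_C(a,b)`. -/
noncomputable def W0 {n m : ℕ} (C : Matrix (Fin n) (Fin m) ℝ)
    (a : Fin n → ℝ) (b : Fin m → ℝ) : ℝ :=
  sInf {v | ∃ P ∈ couplings a b, v = dotp P C}

namespace EntOTAux

variable {n m : ℕ}

instance : FirstCountableTopology (Matrix (Fin n) (Fin m) ℝ) :=
  inferInstanceAs (FirstCountableTopology (Fin n → Fin m → ℝ))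

lemma cont_eval (i : Fin n) (j : Fin m) :
    Continuous fun P : Matrix (Fin n) (Fin m) ℝ => P i j :=
  (continuous_apply j).comp (continuous_apply i)

lemma continuous_entropy : Continuous (entropy (n := n) (m := m)) := by
  unfold entropy
  refine Continuous.neg (continuous_finset_sum _ fun i _ =>
    continuous_finset_sum _ fun j _ => ?_)
  have h1 : Continuous fun P : Matrix (Fin n) (Fin m) ℝ => P i j * Real.log (P i j) :=
    Real.continuous_mul_log.comp (cont_eval i j)
  have h2 : (fun P : Matrix (Fin n) (Fin m) ℝ => P i j * (Real.log (P i j) - 1))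
      = fun P => P i j * Real.log (P i j) - P i j := by
    funext P; ring
  rw [h2]
  exact h1.sub (cont_eval i j)

lemma continuous_dotp (C : Matrix (Fin n) (Fin m) ℝ) :
    Continuous fun P : Matrix (Fin n) (Fin m) ℝ => dotp P C := by
  unfold dotp
  exact continuous_finset_sum _ fun i _ => continuous_finset_sum _ fun j _ =>
    (cont_eval i j).mul continuous_const

lemma isClosed_couplings (a : Fin n → ℝ) (b : Fin m → ℝ) :
    IsClosed (couplings a b) := by
  have h1 : IsClosed {P : Matrix (Fin n) (Fin m) ℝ | ∀ i j, 0 ≤ P i j} := by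
    simp_rw [Set.setOf_forall]
    exact isClosed_iInter fun i => isClosed_iInter fun j =>
      isClosed_le continuous_const (cont_eval i j)
  have h2 : IsClosed {P : Matrix (Fin n) (Fin m) ℝ | ∀ i, ∑ j, P i j = a i} := by
    simp_rw [Set.setOf_forall]
    exact isClosed_iInter fun i =>
      isClosed_eq (continuous_finset_sum _ fun j _ => cont_eval i j) continuous_const
  have h3 : IsClosed {P : Matrix (Fin n) (Fin m) ℝ | ∀ j, ∑ i, P i j = b j} := by
    simp_rw [Set.setOf_forall]
    exact isClosed_iInter fun j =>
      isClosed_eq (continuous_finset_sum _ fun i _ => cont_eval i j) continuous_const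
  have : couplings a b = {P : Matrix (Fin n) (Fin m) ℝ | ∀ i j, 0 ≤ P i j} ∩
      ({P : Matrix (Fin n) (Fin m) ℝ | ∀ i, ∑ j, P i j = a i} ∩
       {P : Matrix (Fin n) (Fin m) ℝ | ∀ j, ∑ i, P i j = b j}) := rfl
  rw [this]
  exact h1.inter (h2.inter h3)

lemma entry_mem_Icc {a : Fin n → ℝ} {b : Fin m → ℝ}
    (ha : (∀ i, 0 ≤ a i) ∧ ∑ i, a i = 1)
    {P : Matrix (Fin n) (Fin m) ℝ} (hP : P ∈ couplings a b) (i : Fin n) (j : Fin m) :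
    P i j ∈ Set.Icc (0:ℝ) 1 := by
  refine ⟨hP.1 i j, ?_⟩
  have h1 : P i j ≤ ∑ j', P i j' :=
    Finset.single_le_sum (fun j' _ => hP.1 i j') (Finset.mem_univ j)
  have h2 : a i ≤ ∑ i', a i' :=
    Finset.single_le_sum (fun i' _ => ha.1 i') (Finset.mem_univ i)
  rw [hP.2.1 i] at h1
  rw [ha.2] at h2
  linarith

lemma isCompact_couplings {a : Fin n → ℝ} {b : Fin m → ℝ}
    (ha : (∀ i, 0 ≤ a i) ∧ ∑ i, a i = 1) :
    IsCompact (couplings a b) := by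
  have hbig : IsCompact (Set.univ.pi fun _ : Fin n =>
      (Set.univ.pi fun _ : Fin m => Set.Icc (0:ℝ) 1)) :=
    isCompact_univ_pi fun _ => isCompact_univ_pi fun _ => isCompact_Icc
  refine hbig.of_isClosed_subset (isClosed_couplings a b) ?_
  intro P hPm
  intro i _
  intro j _
  exact entry_mem_Icc ha hPm i j

lemma term_nonpos {x : ℝ} (hx : x ∈ Set.Icc (0:ℝ) 1) : x * (Real.log x - 1) ≤ 0 := by
  have hlog := Real.log_nonpos hx.1 hx.2
  nlinarith [hx.1]

lemma term_lower {x : ℝ} (hx : x ∈ Set.Icc (0:ℝ) 1) : -2 ≤ x * (Real.log x - 1) := by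
  rcases eq_or_lt_of_le hx.1 with h | h
  · simp [← h]
  · have h1 : Real.log (1/x) ≤ 1/x - 1 := Real.log_le_sub_one_of_pos (by positivity)
    rw [one_div, Real.log_inv] at h1
    have h2 : x * (-Real.log x) ≤ x * (x⁻¹ - 1) :=
      mul_le_mul_of_nonneg_left h1 (le_of_lt h)
    have h3 : x * (x⁻¹ - 1) = 1 - x := by field_simp
    nlinarith [hx.2]

lemma entropy_nonneg {P : Matrix (Fin n) (Fin m) ℝ}
    (h : ∀ i j, P i j ∈ Set.Icc (0:ℝ) 1) : 0 ≤ entropy P := by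
  unfold entropy
  have : ∑ i, ∑ j, P i j * (Real.log (P i j) - 1) ≤ 0 := by
    apply Finset.sum_nonpos
    intro i _
    apply Finset.sum_nonpos
    intro j _
    exact term_nonpos (h i j)
  linarith

lemma entropy_le {P : Matrix (Fin n) (Fin m) ℝ}
    (h : ∀ i j, P i j ∈ Set.Icc (0:ℝ) 1) : entropy P ≤ 2 * (n * m) := by
  unfold entropy
  have h1 : ∑ i : Fin n, ∑ j : Fin m, (-2 : ℝ) ≤
      ∑ i, ∑ j, P i j * (Real.log (P i j) - 1) :=
    Finset.sum_le_sum fun i _ => Finset.sum_le_sum fun j _ => term_lower (h i j)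
  have h2 : ∑ _i : Fin n, ∑ _j : Fin m, (-2 : ℝ) = -(2 * (n * m)) := by
    simp; ring
  rw [h2] at h1
  linarith

lemma W0_le {a : Fin n → ℝ} {b : Fin m → ℝ}
    (ha : (∀ i, 0 ≤ a i) ∧ ∑ i, a i = 1)
    (C : Matrix (Fin n) (Fin m) ℝ)
    {R : Matrix (Fin n) (Fin m) ℝ} (hR : R ∈ couplings a b) :
    W0 C a b ≤ dotp R C := by
  apply csInf_le
  · refine ⟨-∑ i, ∑ j, |C i j|, ?_⟩
    rintro v ⟨R', hR', rfl⟩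
    unfold dotp
    have : ∀ i ∈ Finset.univ, ∀ j ∈ (Finset.univ : Finset (Fin m)),
        -|C i j| ≤ R' i j * C i j := by
      intro i _ j _
      have hIcc := entry_mem_Icc ha hR' i j
      have habs : |R' i j * C i j| ≤ |C i j| := by
        rw [abs_mul]
        calc |R' i j| * |C i j| ≤ 1 * |C i j| := by
              apply mul_le_mul_of_nonneg_right _ (abs_nonneg _)
              rw [abs_of_nonneg hIcc.1]; exact hIcc.2
          _ = |C i j| := one_mul _
      calc -|C i j| ≤ -|R' i j * C i j| := by linarith
        _ ≤ R' i j * C i j := neg_abs_le _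
    calc -∑ i, ∑ j, |C i j| = ∑ i, ∑ j, -|C i j| := by simp
      _ ≤ ∑ i, ∑ j, R' i j * C i j :=
        Finset.sum_le_sum fun i hi => Finset.sum_le_sum fun j hj => this i hi j hj
  · exact ⟨R, hR, rfl⟩

lemma sum_entries_eq_one {a : Fin n → ℝ} {b : Fin m → ℝ}
    (ha2 : ∑ i, a i = 1)
    {P : Matrix (Fin n) (Fin m) ℝ} (hP : P ∈ couplings a b) :
    ∑ i, ∑ j, P i j = 1 := by
  rw [Finset.sum_congr rfl fun i _ => hP.2.1 i, ha2]

lemma neg_entropy_eq (P : Matrix (Fin n) (Fin m) ℝ) :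
    -entropy P = (∑ i, ∑ j, P i j * Real.log (P i j)) - ∑ i, ∑ j, P i j := by
  unfold entropy
  rw [neg_neg, ← Finset.sum_sub_distrib]
  congr 1
  ext i
  rw [← Finset.sum_sub_distrib]
  congr 1
  ext j
  ring

end EntOTAux

open EntOTAux in
theorem stmt2 {n m : ℕ} (a : Fin n → ℝ) (b : Fin m → ℝ)
    (ha : (∀ i, 0 ≤ a i) ∧ ∑ i, a i = 1) (hb : (∀ j, 0 ≤ b j) ∧ ∑ j, b j = 1)
    (C : Matrix (Fin n) (Fin m) ℝ)
    (P : ℝ → Matrix (Fin n) (Fin m) ℝ)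
    (hP : ∀ ε > (0:ℝ), P ε ∈ couplings a b ∧
      ∀ Q ∈ couplings a b,
        dotp (P ε) C - ε * entropy (P ε) ≤ dotp Q C - ε * entropy Q)
    (P0 : Matrix (Fin n) (Fin m) ℝ)
    (hP0 : P0 ∈ couplings a b ∧ dotp P0 C = W0 C a b ∧
      ∀ Q ∈ couplings a b, dotp Q C = W0 C a b → -entropy P0 ≤ -entropy Q) :
    Tendsto P (nhdsWithin 0 (Set.Ioi 0)) (nhds P0) := by
  have hK : IsCompact (couplings a b) := isCompact_couplings ha
  apply tendsto_of_subseq_tendsto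
  intro es hes
  have hpos : ∀ᶠ k in atTop, es k ∈ Set.Ioi (0:ℝ) := hes self_mem_nhdsWithin
  have hfreq : ∃ᶠ k in atTop, P (es k) ∈ couplings a b :=
    (hpos.mono fun k hk => (hP _ hk).1).frequently
  obtain ⟨Q, hQK, φ, hφmono, hφtend⟩ := hK.tendsto_subseq' hfreq
  -- es ∘ φ tends to 0 from within Ioi
  have h0 : Tendsto (fun k => es (φ k)) atTop (nhdsWithin 0 (Set.Ioi 0)) :=
    hes.comp hφmono.tendsto_atTop
  have h0' : Tendsto (fun k => es (φ k)) atTop (nhds 0) := h0.mono_right nhdsWithin_le_nhds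
  have hεpos : ∀ᶠ k in atTop, 0 < es (φ k) := h0 self_mem_nhdsWithin
  -- eventual facts about the regularized minimizers
  have key : ∀ᶠ k in atTop,
      entropy P0 ≤ entropy (P (es (φ k))) ∧
      dotp (P (es (φ k))) C ≤ W0 C a b + 2 * (n * m) * es (φ k) := by
    filter_upwards [hεpos] with k hk
    set ε := es (φ k) with hε
    obtain ⟨hfeas, hopt⟩ := hP ε hk
    have h1 := hopt P0 hP0.1
    have h2 : W0 C a b ≤ dotp (P ε) C := W0_le ha C hfeas
    have hIcc : ∀ i j, P ε i j ∈ Set.Icc (0:ℝ) 1 := fun i j => entry_mem_Icc ha hfeas i j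
    have hIcc0 : ∀ i j, P0 i j ∈ Set.Icc (0:ℝ) 1 := fun i j => entry_mem_Icc ha hP0.1 i j
    have hH1 : 0 ≤ entropy P0 := entropy_nonneg hIcc0
    have hH2 : entropy (P ε) ≤ 2 * (n * m) := entropy_le hIcc
    constructor
    · -- entropy P0 ≤ entropy (P ε)
      have hd0 : dotp P0 C = W0 C a b := hP0.2.1
      have hmul : ε * entropy P0 ≤ ε * entropy (P ε) := by linarith
      exact le_of_mul_le_mul_left hmul hk
    · nlinarith
  -- limits
  have htendE : Tendsto (fun k => entropy (P (es (φ k)))) atTop (nhds (entropy Q)) :=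
    (continuous_entropy.tendsto Q).comp hφtend
  have htendD : Tendsto (fun k => dotp (P (es (φ k))) C) atTop (nhds (dotp Q C)) :=
    ((continuous_dotp C).tendsto Q).comp hφtend
  have hH : entropy P0 ≤ entropy Q :=
    ge_of_tendsto htendE (key.mono fun k hk => hk.1)
  have htendW : Tendsto (fun k => W0 C a b + 2 * (n * m) * es (φ k)) atTop
      (nhds (W0 C a b)) := by
    have := (h0'.const_mul (2 * (n * m) : ℝ)).const_add (W0 C a b)
    simpa using this
  have hdle : dotp Q C ≤ W0 C a b :=
    le_of_tendsto_of_tendsto htendD htendW (key.mono fun k hk => hk.2)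
  have hQopt : dotp Q C = W0 C a b := le_antisymm hdle (W0_le ha C hQK)
  have hH' : -entropy P0 ≤ -entropy Q := hP0.2.2 Q hQK hQopt
  have hHeq : entropy Q = entropy P0 := by linarith
  -- Q = P0 by strict convexity
  have hQP0 : Q = P0 := by
    by_contra hne
    obtain ⟨i0, hi0⟩ : ∃ i0, Q i0 ≠ P0 i0 := Function.ne_iff.mp hne
    obtain ⟨j0, hj0⟩ : ∃ j0, Q i0 j0 ≠ P0 i0 j0 := Function.ne_iff.mp hi0
    set M : Matrix (Fin n) (Fin m) ℝ := fun i j => (P0 i j + Q i j) / 2 with hM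
    have hMK : M ∈ couplings a b := by
      refine ⟨fun i j => by have := hP0.1.1 i j; have := hQK.1 i j; simp only [hM]; linarith,
        fun i => ?_, fun j => ?_⟩
      · simp only [hM]
        rw [← Finset.sum_div, Finset.sum_add_distrib, hP0.1.2.1 i, hQK.2.1 i]
        ring
      · simp only [hM]
        rw [← Finset.sum_div, Finset.sum_add_distrib, hP0.1.2.2 j, hQK.2.2 j]
        ring
    have hMopt : dotp M C = W0 C a b := by
      unfold dotp
      have : ∀ i j, M i j * C i j = (P0 i j * C i j + Q i j * C i j) / 2 := by
        intro i j; simp only [hM]; ring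
      calc ∑ i, ∑ j, M i j * C i j
          = ∑ i, ∑ j, (P0 i j * C i j + Q i j * C i j) / 2 := by
            exact Finset.sum_congr rfl fun i _ => Finset.sum_congr rfl fun j _ => this i j
        _ = ((∑ i, ∑ j, P0 i j * C i j) + ∑ i, ∑ j, Q i j * C i j) / 2 := by
            simp only [add_div, Finset.sum_add_distrib, Finset.sum_div]
        _ = W0 C a b := by
            have e1 : ∑ i, ∑ j, P0 i j * C i j = W0 C a b := hP0.2.1
            have e2 : ∑ i, ∑ j, Q i j * C i j = W0 C a b := hQopt
            rw [e1, e2]; ring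
    -- strict convexity of x log x
    have hstrict : ∑ i, ∑ j, M i j * Real.log (M i j) <
        ((∑ i, ∑ j, P0 i j * Real.log (P0 i j)) +
         ∑ i, ∑ j, Q i j * Real.log (Q i j)) / 2 := by
      set f : ℝ → ℝ := fun x => x * Real.log x with hf
      have hle : ∀ i j, f (M i j) ≤ (f (P0 i j) + f (Q i j)) / 2 := by
        intro i j
        have := Real.convexOn_mul_log.2 (Set.mem_Ici.mpr (hP0.1.1 i j))
          (Set.mem_Ici.mpr (hQK.1 i j)) (by norm_num : (0:ℝ) ≤ 1/2)
          (by norm_num : (0:ℝ) ≤ 1/2) (by norm_num : (1:ℝ)/2 + 1/2 = 1)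
        simp only [smul_eq_mul] at this
        have hMij : M i j = 1/2 * P0 i j + 1/2 * Q i j := by simp only [hM]; ring
        rw [hMij]
        calc f (1/2 * P0 i j + 1/2 * Q i j) ≤ 1/2 * f (P0 i j) + 1/2 * f (Q i j) := this
          _ = (f (P0 i j) + f (Q i j)) / 2 := by ring
      have hlt : f (M i0 j0) < (f (P0 i0 j0) + f (Q i0 j0)) / 2 := by
        have := Real.strictConvexOn_mul_log.2 (Set.mem_Ici.mpr (hP0.1.1 i0 j0))
          (Set.mem_Ici.mpr (hQK.1 i0 j0)) (Ne.symm hj0) (by norm_num : (0:ℝ) < 1/2)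
          (by norm_num : (0:ℝ) < 1/2) (by norm_num : (1:ℝ)/2 + 1/2 = 1)
        simp only [smul_eq_mul] at this
        have hMij : M i0 j0 = 1/2 * P0 i0 j0 + 1/2 * Q i0 j0 := by simp only [hM]; ring
        rw [hMij]
        calc f (1/2 * P0 i0 j0 + 1/2 * Q i0 j0) < 1/2 * f (P0 i0 j0) + 1/2 * f (Q i0 j0) :=
              this
          _ = (f (P0 i0 j0) + f (Q i0 j0)) / 2 := by ring
      have main : ∑ i, ∑ j, f (M i j) < ∑ i, ∑ j, (f (P0 i j) + f (Q i j)) / 2 := by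
        apply Finset.sum_lt_sum
        · intro i _
          exact Finset.sum_le_sum fun j _ => hle i j
        · refine ⟨i0, Finset.mem_univ i0, ?_⟩
          apply Finset.sum_lt_sum
          · intro j _; exact hle i0 j
          · exact ⟨j0, Finset.mem_univ j0, hlt⟩
      calc ∑ i, ∑ j, M i j * Real.log (M i j) = ∑ i, ∑ j, f (M i j) := rfl
        _ < ∑ i, ∑ j, (f (P0 i j) + f (Q i j)) / 2 := main
        _ = ((∑ i, ∑ j, f (P0 i j)) + ∑ i, ∑ j, f (Q i j)) / 2 := by
            simp only [add_div, Finset.sum_add_distrib, Finset.sum_div]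
    -- derive contradiction with optimality of P0's entropy
    have hsum0 : ∑ i, ∑ j, P0 i j = 1 := sum_entries_eq_one ha.2 hP0.1
    have hsumQ : ∑ i, ∑ j, Q i j = 1 := sum_entries_eq_one ha.2 hQK
    have hsumM : ∑ i, ∑ j, M i j = 1 := sum_entries_eq_one ha.2 hMK
    have hEM := neg_entropy_eq M
    have hE0 := neg_entropy_eq P0
    have hEQ := neg_entropy_eq Q
    rw [hsumM] at hEM
    rw [hsum0] at hE0
    rw [hsumQ] at hEQ
    have hfin : -entropy M < -entropy P0 := by
      have hQP : -entropy Q = -entropy P0 := by rw [hHeq]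
      rw [hEQ, hE0] at hQP
      rw [hEM, hE0]
      linarith
    have := hP0.2.2 M hMK hMopt
    linarith
  refine ⟨φ, ?_⟩
  rw [hQP0] at hφtend
  exact hφtend
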